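/- Let α₁, …, α_m be complex numbers that are linearly independent over ℚ, and for g = (g₁, …, g_m) ∈ ℤᵐ write ⟨α, g⟩ = Σ αᵢgᵢ. Then the assignment g ↦ exp(t⟨α, g⟩) extends to a ring homomorphism Γ : ℤ[ℤᵐ] → ℂ[[t]] from the group algebra of ℤᵐ (each exp(t⟨α, g⟩) being a unit of ℂ[[t]]), and Γ is injective. -/

import Mathlib

noncomputable def expPS (β : ℂ) : PowerSeries ℂ :=
  PowerSeries.mk fun n => β ^ n / (n.factorial : ℂ)

lemma expPS_eq_rescale (β : ℂ) : expPS β = PowerSeries.rescale β (PowerSeries.exp ℂ) := by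
  ext n
  simp [expPS, PowerSeries.coeff_rescale, PowerSeries.coeff_exp, div_eq_mul_inv]

lemma expPS_mul (a b : ℂ) : expPS a * expPS b = expPS (a + b) := by
  simp only [expPS_eq_rescale]
  exact PowerSeries.exp_mul_exp_eq_exp_add a b

lemma expPS_zero : expPS 0 = 1 := by
  ext n
  cases n <;> simp [expPS, PowerSeries.coeff_one]

lemma key_vandermonde {G : Type*} [DecidableEq G] (s : Finset G) (β : G → ℂ) (c : G → ℂ)
    (hinj : Set.InjOn β s) (h : ∀ n : ℕ, ∑ g ∈ s, c g * β g ^ n = 0) :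
    ∀ g ∈ s, c g = 0 := by
  intro g₀ hg₀
  set Q : Polynomial ℂ := ∏ g ∈ s.erase g₀, (Polynomial.X - Polynomial.C (β g)) with hQ
  have hsum : ∑ g ∈ s, c g * Q.eval (β g) = 0 := by
    have heval : ∀ g : G, Q.eval (β g) =
        ∑ n ∈ Finset.range (Q.natDegree + 1), Q.coeff n * β g ^ n := fun g =>
      Polynomial.eval_eq_sum_range _
    calc ∑ g ∈ s, c g * Q.eval (β g)
        = ∑ g ∈ s, ∑ n ∈ Finset.range (Q.natDegree + 1), Q.coeff n * (c g * β g ^ n) := by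
          refine Finset.sum_congr rfl fun g _ => ?_
          rw [heval, Finset.mul_sum]
          exact Finset.sum_congr rfl fun n _ => by ring
      _ = ∑ n ∈ Finset.range (Q.natDegree + 1), Q.coeff n * ∑ g ∈ s, c g * β g ^ n := by
          rw [Finset.sum_comm]
          exact Finset.sum_congr rfl fun n _ => by rw [Finset.mul_sum]
      _ = 0 := by simp [h]
  have hzero : ∀ g ∈ s, g ≠ g₀ → c g * Q.eval (β g) = 0 := by
    intro g hg hne
    have : Q.eval (β g) = 0 := by
      rw [hQ, Polynomial.eval_prod]
      exact Finset.prod_eq_zero (Finset.mem_erase.mpr ⟨hne, hg⟩)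
        (by simp : Polynomial.eval (β g) (Polynomial.X - Polynomial.C (β g)) = 0)
    rw [this, mul_zero]
  rw [Finset.sum_eq_single g₀ hzero (fun h => absurd hg₀ h)] at hsum
  have hQne : Q.eval (β g₀) ≠ 0 := by
    rw [hQ, Polynomial.eval_prod]
    refine Finset.prod_ne_zero_iff.mpr fun g hg => ?_
    simp only [Polynomial.eval_sub, Polynomial.eval_X, Polynomial.eval_C, sub_ne_zero]
    exact fun hbe => (Finset.mem_erase.mp hg).1 (hinj hg₀ (Finset.mem_erase.mp hg).2 hbe).symm
  exact (mul_eq_zero.mp hsum).resolve_right hQne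

/-- if `α₁, …, α_m ∈ ℂ` are linearly independent over `ℚ`, then each
`exp(t⟨α, g⟩)` is a unit of `ℂ[[t]]`, the assignment `g ↦ exp(t⟨α, g⟩)` extends to a
ring homomorphism `Γ : ℤ[ℤᵐ] → ℂ[[t]]`, and `Γ` is injective. -/
theorem exists_injective_expHom {m : ℕ} (α : Fin m → ℂ)
    (hα : LinearIndependent ℚ α) :
    (∀ g : Fin m → ℤ, IsUnit (expPS (∑ i, α i * (g i : ℂ)))) ∧
    ∃ Γ : AddMonoidAlgebra ℤ (Fin m → ℤ) →+* PowerSeries ℂ,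
      (∀ g : Fin m → ℤ,
        Γ (AddMonoidAlgebra.single g (1 : ℤ)) = expPS (∑ i, α i * (g i : ℂ))) ∧
      Function.Injective Γ := by
  set β : (Fin m → ℤ) → ℂ := fun g => ∑ i, α i * (g i : ℂ) with hβ
  have hβadd : ∀ g g' : Fin m → ℤ, β (g + g') = β g + β g' := by
    intro g g'
    simp only [hβ, Pi.add_apply, Int.cast_add, mul_add, Finset.sum_add_distrib]
  have hβzero : β 0 = 0 := by simp [hβ]
  have hβinj : Function.Injective β := by
    intro g g' hgg'
    have hsum : ∑ i, (((g i - g' i : ℤ) : ℚ)) • α i = 0 := by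
      have : β g - β g' = 0 := by rw [hgg', sub_self]
      rw [hβ] at this
      simp only [← Finset.sum_sub_distrib, ← mul_sub] at this
      rw [← this]
      refine Finset.sum_congr rfl fun i _ => ?_
      rw [Rat.smul_def]
      push_cast
      ring
    have := Fintype.linearIndependent_iff.mp hα _ hsum
    funext i
    have hi := this i
    have : ((g i - g' i : ℤ) : ℚ) = 0 := hi
    exact_mod_cast sub_eq_zero.mp (by exact_mod_cast this)
  have hunit : ∀ g : Fin m → ℤ, IsUnit (expPS (β g)) := by
    intro g
    rw [PowerSeries.isUnit_iff_constantCoeff]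
    have : PowerSeries.constantCoeff (expPS (β g)) = 1 := by
      simp [expPS, ← PowerSeries.coeff_zero_eq_constantCoeff_apply]
    rw [this]; exact isUnit_one
  refine ⟨hunit, ?_⟩
  set F : Multiplicative (Fin m → ℤ) →* PowerSeries ℂ :=
    { toFun := fun g => expPS (β (Multiplicative.toAdd g))
      map_one' := by simp [hβzero, expPS_zero]
      map_mul' := fun a b => by
        show expPS (β (a.toAdd + b.toAdd)) = _
        rw [hβadd, ← expPS_mul] } with hF
  set Γalg := AddMonoidAlgebra.lift ℤ (PowerSeries ℂ) (Fin m → ℤ) F with hΓalg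
  refine ⟨Γalg.toRingHom, fun g => ?_, ?_⟩
  · show Γalg (AddMonoidAlgebra.single g (1 : ℤ)) = _
    rw [AddMonoidAlgebra.lift_single]
    simp [hF]
    exact one_smul ℤ _
  · rw [injective_iff_map_eq_zero]
    intro x hx
    have hcoeff : ∀ n : ℕ, ∑ g ∈ x.coeff.support, (x.coeff g : ℂ) * β g ^ n = 0 := by
      intro n
      have hx' : Γalg x = 0 := hx
      rw [AddMonoidAlgebra.lift_apply] at hx'
      have h0 := congrArg (PowerSeries.coeff n) hx'
      rw [Finsupp.sum] at h0
      simp only [map_sum, map_zero, map_zsmul] at h0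
      have h1 : ∑ g ∈ x.coeff.support, (x.coeff g : ℂ) * (β g ^ n / (n.factorial : ℂ)) = 0 := by
        rw [← h0]
        refine Finset.sum_congr rfl fun g _ => ?_
        simp [hF, expPS, PowerSeries.coeff_mk, zsmul_eq_mul]
      have hfac : ((n.factorial : ℂ)) ≠ 0 := by
        exact_mod_cast n.factorial_ne_zero
      have := congrArg (· * (n.factorial : ℂ)) h1
      simp only [Finset.sum_mul, zero_mul] at this
      rw [← this]
      refine Finset.sum_congr rfl fun g _ => ?_
      field_simp
    have hz := key_vandermonde x.coeff.support β (fun g => (x.coeff g : ℂ)) (hβinj.injOn) hcoeff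
    ext g
    by_cases hg : g ∈ x.coeff.support
    · have : ((x.coeff g : ℤ) : ℂ) = 0 := hz g hg
      exact_mod_cast this
    · exact Finsupp.notMem_support_iff.mp hg
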